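/- Let E, E' be distinct J-complex lines in ℝ⁴, where J is the standard complex structure, and let K' be the standard orthogonal complex structure with JK' = −K'J. If E' = E^⊥ then the Lagrangian loci Λ⁺_E and Λ⁺_{E'} in ℙ(K') coincide, while if E' ≠ E^⊥ then Λ⁺_E ∩ Λ⁺_{E'} consists of exactly two K'-complex planes. -/

import Mathlib

/- Coordinates on ℝ⁴ in the order (x₁, x₂, y₁, y₂). -/

/-- The Euclidean dot product on ℝ⁴. -/
def dot4 (u v : Fin 4 → ℝ) : ℝ := ∑ i, u i * v i

/-- The standard complex structure `J` with `J∂_{x_j} = ∂_{y_j}`. -/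
def Jm : Matrix (Fin 4) (Fin 4) ℝ :=
  !![0, 0, -1, 0; 0, 0, 0, -1; 1, 0, 0, 0; 0, 1, 0, 0]

/-- The orthogonal complex structure `K'` with `JK' = −K'J`. -/
def K'm : Matrix (Fin 4) (Fin 4) ℝ :=
  !![0, -1, 0, 0; 1, 0, 0, 0; 0, 0, 0, 1; 0, 0, -1, 0]

/-- A `J`-complex line. -/
def IsJLine (E : Submodule ℝ (Fin 4 → ℝ)) : Prop :=
  Module.finrank ℝ E = 2 ∧ ∀ w ∈ E, Jm.mulVec w ∈ E

/-- A `K'`-complex line. -/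
def IsK'Line (F : Submodule ℝ (Fin 4 → ℝ)) : Prop :=
  Module.finrank ℝ F = 2 ∧ ∀ w ∈ F, K'm.mulVec w ∈ F

/-- The Lagrangian locus `Λ⁺_E ⊆ ℙ(K')` of a `J`-complex line `E`. -/
def LagLocus (E : Submodule ℝ (Fin 4 → ℝ)) : Set (Submodule ℝ (Fin 4 → ℝ)) :=
  {F | IsK'Line F ∧ Module.finrank ℝ ↥(F ⊓ E) = 1}

lemma mulVec_J (v : Fin 4 → ℝ) : Jm.mulVec v = ![-v 2, -v 3, v 0, v 1] := by
  funext i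
  fin_cases i <;>
    simp [Jm, Matrix.mulVec, dotProduct, Fin.sum_univ_four]

lemma mulVec_K (v : Fin 4 → ℝ) : K'm.mulVec v = ![-v 1, v 0, v 3, -v 2] := by
  funext i
  fin_cases i <;>
    simp [K'm, Matrix.mulVec, dotProduct, Fin.sum_univ_four]

lemma vec4_eq (v : Fin 4 → ℝ) : v = ![v 0, v 1, v 2, v 3] := by
  funext i; fin_cases i <;> simp

lemma normsq_pos (v : Fin 4 → ℝ) (hv : v ≠ 0) :
    0 < v 0 ^ 2 + v 1 ^ 2 + v 2 ^ 2 + v 3 ^ 2 := by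
  have key : v 0 ≠ 0 ∨ v 1 ≠ 0 ∨ v 2 ≠ 0 ∨ v 3 ≠ 0 := by
    by_contra h
    push_neg at h
    obtain ⟨h0, h1, h2, h3⟩ := h
    exact hv (by funext i; fin_cases i <;> simp [h0, h1, h2, h3])
  rcases key with h | h | h | h <;>
    nlinarith [sq_nonneg (v 0), sq_nonneg (v 1), sq_nonneg (v 2), sq_nonneg (v 3),
      mul_self_pos.mpr h]

lemma quat4 (a b c d : ℝ) (v : Fin 4 → ℝ) (hv : v ≠ 0)
    (h : a • v + b • Jm.mulVec v + c • K'm.mulVec v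
        + d • Jm.mulVec (K'm.mulVec v) = 0) :
    a = 0 ∧ b = 0 ∧ c = 0 ∧ d = 0 := by
  rw [mulVec_K, mulVec_J, mulVec_J] at h
  nth_rewrite 1 [vec4_eq v] at h
  have e0 := congrFun h 0
  have e1 := congrFun h 1
  have e2 := congrFun h 2
  have e3 := congrFun h 3
  simp [Matrix.smul_cons, Matrix.smul_empty] at e0 e1 e2 e3
  have hn := (normsq_pos v hv).ne'
  refine ⟨?_, ?_, ?_, ?_⟩
  · have : a * (v 0 ^ 2 + v 1 ^ 2 + v 2 ^ 2 + v 3 ^ 2) = 0 := by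
      linear_combination v 0 * e0 + v 1 * e1 + v 2 * e2 + v 3 * e3
    exact (mul_eq_zero.mp this).resolve_right hn
  · have : b * (v 0 ^ 2 + v 1 ^ 2 + v 2 ^ 2 + v 3 ^ 2) = 0 := by
      linear_combination (-v 2) * e0 + (-v 3) * e1 + v 0 * e2 + v 1 * e3
    exact (mul_eq_zero.mp this).resolve_right hn
  · have : c * (v 0 ^ 2 + v 1 ^ 2 + v 2 ^ 2 + v 3 ^ 2) = 0 := by
      linear_combination (-v 1) * e0 + v 0 * e1 + v 3 * e2 + (-v 2) * e3
    exact (mul_eq_zero.mp this).resolve_right hn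
  · have : d * (v 0 ^ 2 + v 1 ^ 2 + v 2 ^ 2 + v 3 ^ 2) = 0 := by
      linear_combination (-v 3) * e0 + v 2 * e1 + (-v 1) * e2 + v 0 * e3
    exact (mul_eq_zero.mp this).resolve_right hn

open Submodule Module

-- vector identity helpers
lemma Kcomb (a b c d : ℝ) (v : Fin 4 → ℝ) :
    K'm.mulVec (a • v + b • Jm.mulVec v + c • K'm.mulVec v
        + d • Jm.mulVec (K'm.mulVec v))
      = (-c) • v + d • Jm.mulVec v + a • K'm.mulVec v
        + (-b) • Jm.mulVec (K'm.mulVec v) := by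
  funext i
  simp only [mulVec_K, mulVec_J]
  fin_cases i <;> simp [Matrix.vecHead, Matrix.vecTail, show (Fin.succ 2 : Fin 4) = 3 by rfl] <;> ring

lemma Jcomb (a b c d : ℝ) (v : Fin 4 → ℝ) :
    Jm.mulVec (a • v + b • Jm.mulVec v + c • K'm.mulVec v
        + d • Jm.mulVec (K'm.mulVec v))
      = (-b) • v + a • Jm.mulVec v + (-d) • K'm.mulVec v
        + c • Jm.mulVec (K'm.mulVec v) := by
  funext i
  simp only [mulVec_K, mulVec_J]
  fin_cases i <;> simp [Matrix.vecHead, Matrix.vecTail, show (Fin.succ 2 : Fin 4) = 3 by rfl] <;> ring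

lemma Ksmul (c : ℝ) (w : Fin 4 → ℝ) : K'm.mulVec (c • w) = c • K'm.mulVec w := by
  funext i
  simp only [mulVec_K]
  fin_cases i <;> simp

lemma Kne (w : Fin 4 → ℝ) (hw : w ≠ 0) : K'm.mulVec w ≠ 0 := by
  intro h
  apply hw
  funext i
  have h0 := congrFun h 0
  have h1 := congrFun h 1
  have h2 := congrFun h 2
  have h3 := congrFun h 3
  simp [mulVec_K] at h0 h1 h2 h3
  fin_cases i <;> simp [h0, h1, h2, h3]

-- independence of pairs
lemma indep_J (v : Fin 4 → ℝ) (hv : v ≠ 0) :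
    LinearIndependent ℝ ![v, Jm.mulVec v] := by
  rw [LinearIndependent.pair_iff]
  intro s t h
  have := quat4 s t 0 0 v hv (by
    simpa using h)
  exact ⟨this.1, this.2.1⟩

lemma indep_K (v : Fin 4 → ℝ) (hv : v ≠ 0) :
    LinearIndependent ℝ ![v, K'm.mulVec v] := by
  rw [LinearIndependent.pair_iff]
  intro s t h
  have := quat4 s 0 t 0 v hv (by simpa using h)
  exact ⟨this.1, this.2.2.1⟩

lemma finrank_span_pair {x y : Fin 4 → ℝ} (h : LinearIndependent ℝ ![x, y]) :
    finrank ℝ (span ℝ {x, y} : Submodule ℝ (Fin 4 → ℝ)) = 2 := by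
  have := finrank_span_eq_card h
  rwa [Matrix.range_cons_cons_empty, Fintype.card_fin] at this

lemma exists_ne_zero_of_finrank_two {S : Submodule ℝ (Fin 4 → ℝ)}
    (h : finrank ℝ S = 2) : ∃ v ∈ S, v ≠ 0 := by
  rw [← Submodule.ne_bot_iff]
  intro hb
  rw [hb] at h
  simp [finrank_bot] at h

lemma mk_K (v : Fin 4 → ℝ) (hv : v ≠ 0) :
    IsK'Line (span ℝ {v, K'm.mulVec v}) := by
  constructor
  · exact finrank_span_pair (indep_K v hv)
  · intro w hw
    rw [Submodule.mem_span_pair] at hw ⊢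
    obtain ⟨s, t, rfl⟩ := hw
    refine ⟨-t, s, ?_⟩
    have := Kcomb s 0 t 0 v
    simp only [zero_smul, add_zero, zero_add, neg_zero] at this
    rw [this]

lemma mk_J (v : Fin 4 → ℝ) (hv : v ≠ 0) :
    IsJLine (span ℝ {v, Jm.mulVec v}) := by
  constructor
  · exact finrank_span_pair (indep_J v hv)
  · intro w hw
    rw [Submodule.mem_span_pair] at hw ⊢
    obtain ⟨s, t, rfl⟩ := hw
    refine ⟨-t, s, ?_⟩
    have := Jcomb s t 0 0 v
    simp only [zero_smul, add_zero, zero_add, neg_zero] at this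
    rw [this]

lemma elt_K {F : Submodule ℝ (Fin 4 → ℝ)} (hF : IsK'Line F)
    {v : Fin 4 → ℝ} (hvF : v ∈ F) (hv : v ≠ 0) :
    F = span ℝ {v, K'm.mulVec v} := by
  have hle : span ℝ {v, K'm.mulVec v} ≤ F := by
    rw [Submodule.span_le]
    rintro x (rfl | rfl)
    · exact hvF
    · exact hF.2 v hvF
  exact (Submodule.eq_of_le_of_finrank_le hle
    (by rw [hF.1, finrank_span_pair (indep_K v hv)])).symm

lemma elt_J {E : Submodule ℝ (Fin 4 → ℝ)} (hE : IsJLine E)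
    {v : Fin 4 → ℝ} (hvE : v ∈ E) (hv : v ≠ 0) :
    E = span ℝ {v, Jm.mulVec v} := by
  have hle : span ℝ {v, Jm.mulVec v} ≤ E := by
    rw [Submodule.span_le]
    rintro x (rfl | rfl)
    · exact hvE
    · exact hE.2 v hvE
  exact (Submodule.eq_of_le_of_finrank_le hle
    (by rw [hE.1, finrank_span_pair (indep_J v hv)])).symm

lemma four_le {S : Submodule ℝ (Fin 4 → ℝ)} {w : Fin 4 → ℝ} (hw : w ≠ 0)
    (h1 : w ∈ S) (h2 : Jm.mulVec w ∈ S) (h3 : K'm.mulVec w ∈ S)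
    (h4 : Jm.mulVec (K'm.mulVec w) ∈ S) : 4 ≤ finrank ℝ S := by
  have hind : LinearIndependent ℝ
      ![w, Jm.mulVec w, K'm.mulVec w, Jm.mulVec (K'm.mulVec w)] := by
    rw [Fintype.linearIndependent_iff]
    intro g hg i
    have := quat4 (g 0) (g 1) (g 2) (g 3) w hw (by
      simpa [Fin.sum_univ_four] using hg)
    fin_cases i <;> simp [this.1, this.2.1, this.2.2.1, this.2.2.2]
  have hle : span ℝ (Set.range
      ![w, Jm.mulVec w, K'm.mulVec w, Jm.mulVec (K'm.mulVec w)]) ≤ S := by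
    rw [Submodule.span_le, Set.range_subset_iff]
    intro i
    fin_cases i <;>
      simp only [Matrix.cons_val_zero, Matrix.cons_val_one, Matrix.head_cons,
        Matrix.cons_val_two, Matrix.tail_cons, Matrix.cons_val_three] <;>
      assumption
  calc 4 = finrank ℝ (span ℝ (Set.range
      ![w, Jm.mulVec w, K'm.mulVec w, Jm.mulVec (K'm.mulVec w)])) := by
        rw [finrank_span_eq_card hind, Fintype.card_fin]
    _ ≤ finrank ℝ S := Submodule.finrank_mono hle

lemma inter_rank_le_one {F E : Submodule ℝ (Fin 4 → ℝ)}
    (hF : IsK'Line F) (hE : IsJLine E) : finrank ℝ ↥(F ⊓ E) ≤ 1 := by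
  by_contra h
  push_neg at h
  have h2 : 2 ≤ finrank ℝ ↥(F ⊓ E) := h
  have hFe : F ⊓ E = F :=
    Submodule.eq_of_le_of_finrank_le inf_le_left (le_trans (le_of_eq hF.1) h2)
  have hEe : F ⊓ E = E :=
    Submodule.eq_of_le_of_finrank_le inf_le_right (le_trans (le_of_eq hE.1) h2)
  obtain ⟨w, hwE, hw⟩ := exists_ne_zero_of_finrank_two hE.1
  have hwF : w ∈ F := by rw [← hFe, hEe]; exact hwE
  have := four_le hw hwE (hE.2 w hwE) (by rw [← hEe, hFe]; exact hF.2 w hwF)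
    (hE.2 _ (by rw [← hEe, hFe]; exact hF.2 w hwF))
  rw [hE.1] at this
  omega

lemma locus_mem_iff {F E : Submodule ℝ (Fin 4 → ℝ)} (hE : IsJLine E) :
    F ∈ LagLocus E ↔ IsK'Line F ∧ F ⊓ E ≠ ⊥ := by
  unfold LagLocus
  simp only [Set.mem_setOf_eq, and_congr_right_iff]
  intro hF
  have hle := inter_rank_le_one hF hE
  constructor
  · intro h1 hb
    rw [hb] at h1
    simp [finrank_bot] at h1
  · intro hb
    have : 0 < finrank ℝ ↥(F ⊓ E) := by
      rw [Module.finrank_pos_iff]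
      exact Submodule.nontrivial_iff_ne_bot.mpr hb
    omega

lemma disj_J {E E' : Submodule ℝ (Fin 4 → ℝ)} (hE : IsJLine E)
    (hE' : IsJLine E') (hne : E ≠ E') : E ⊓ E' = ⊥ := by
  by_contra hb
  obtain ⟨z, hz, hz0⟩ := Submodule.ne_bot_iff _ |>.mp hb
  exact hne ((elt_J hE hz.1 hz0).trans (elt_J hE' hz.2 hz0).symm)

lemma dot4_expand (u v : Fin 4 → ℝ) :
    dot4 u v = u 0 * v 0 + u 1 * v 1 + u 2 * v 2 + u 3 * v 3 := by
  simp [dot4, Fin.sum_univ_four]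

lemma dot4_self_eq_zero {z : Fin 4 → ℝ} (h : dot4 z z = 0) : z = 0 := by
  by_contra hz
  have := normsq_pos z hz
  rw [dot4_expand] at h
  nlinarith

lemma dot_vK (s t : ℝ) (v : Fin 4 → ℝ) :
    dot4 (s • v + t • Jm.mulVec v) (K'm.mulVec v) = 0 := by
  rw [dot4_expand]
  simp [mulVec_J, mulVec_K, Matrix.vecHead, Matrix.vecTail]
  ring

lemma dot_vJK (s t : ℝ) (v : Fin 4 → ℝ) :
    dot4 (s • v + t • Jm.mulVec v) (Jm.mulVec (K'm.mulVec v)) = 0 := by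
  rw [dot4_expand]
  simp [mulVec_J, mulVec_K, Matrix.vecHead, Matrix.vecTail]
  ring

lemma B_eq_Ep {E Ep : Submodule ℝ (Fin 4 → ℝ)}
    (hperp : ∀ w, w ∈ Ep ↔ ∀ z ∈ E, dot4 z w = 0)
    {v : Fin 4 → ℝ} (hv : v ≠ 0) (hEv : E = span ℝ {v, Jm.mulVec v}) :
    span ℝ {K'm.mulVec v, Jm.mulVec (K'm.mulVec v)} = Ep := by
  have hBle : span ℝ {K'm.mulVec v, Jm.mulVec (K'm.mulVec v)} ≤ Ep := by
    rw [Submodule.span_le]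
    rintro x (rfl | rfl) <;> rw [SetLike.mem_coe, hperp] <;> intro z hz <;>
      rw [hEv, Submodule.mem_span_pair] at hz <;> obtain ⟨s, t, rfl⟩ := hz
    · exact dot_vK s t v
    · exact dot_vJK s t v
  have hdisj : Ep ⊓ E = ⊥ := by
    rw [Submodule.eq_bot_iff]
    rintro z ⟨hzP, hzE⟩
    exact dot4_self_eq_zero ((hperp z).mp hzP z hzE)
  have hEpfr : finrank ℝ Ep ≤ 2 := by
    have h1 := Submodule.finrank_sup_add_finrank_inf_eq Ep E
    rw [hdisj] at h1
    have h2 : finrank ℝ ↥(Ep ⊔ E) ≤ 4 := by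
      have := Submodule.finrank_le (Ep ⊔ E)
      rwa [Module.finrank_fin_fun] at this
    have h3 : finrank ℝ E = 2 := by
      rw [hEv]; exact finrank_span_pair (indep_J v hv)
    rw [finrank_bot] at h1
    omega
  exact Submodule.eq_of_le_of_finrank_le hBle (by
    rw [finrank_span_pair (indep_J (K'm.mulVec v) (Kne v hv))]
    exact hEpfr)

lemma locus_eq_locus_B {E : Submodule ℝ (Fin 4 → ℝ)} (hE : IsJLine E)
    {v : Fin 4 → ℝ} (hv : v ≠ 0) (hEv : E = span ℝ {v, Jm.mulVec v}) :
    LagLocus E = LagLocus (span ℝ {K'm.mulVec v, Jm.mulVec (K'm.mulVec v)}) := by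
  have hB : IsJLine (span ℝ {K'm.mulVec v, Jm.mulVec (K'm.mulVec v)}) :=
    mk_J (K'm.mulVec v) (Kne v hv)
  ext F
  rw [locus_mem_iff hE, locus_mem_iff hB]
  apply and_congr_right
  intro hF
  rw [← not_iff_not, not_ne_iff, not_ne_iff, Submodule.eq_bot_iff, Submodule.eq_bot_iff]
  constructor
  · intro h z hz
    by_contra hz0
    have hKz : K'm.mulVec z ∈ F := hF.2 z hz.1
    have hzB : z ∈ span ℝ {K'm.mulVec v, Jm.mulVec (K'm.mulVec v)} := hz.2
    rw [Submodule.mem_span_pair] at hzB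
    obtain ⟨s, t, rfl⟩ := hzB
    have hid := Kcomb 0 0 s t v
    simp only [zero_smul, add_zero, zero_add, neg_zero] at hid
    have hKzE : K'm.mulVec (s • K'm.mulVec v + t • Jm.mulVec (K'm.mulVec v)) ∈ E := by
      rw [hid, hEv]
      exact Submodule.mem_span_pair.mpr ⟨-s, t, by module⟩
    exact Kne _ hz0 (h _ ⟨hKz, hKzE⟩)
  · intro h z hz
    by_contra hz0
    have hKz : K'm.mulVec z ∈ F := hF.2 z hz.1
    have hzE : z ∈ E := hz.2
    rw [hEv, Submodule.mem_span_pair] at hzE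
    obtain ⟨s, t, rfl⟩ := hzE
    have hid := Kcomb s t 0 0 v
    simp only [zero_smul, add_zero, zero_add, neg_zero] at hid
    have hKzB : K'm.mulVec (s • v + t • Jm.mulVec v)
        ∈ span ℝ {K'm.mulVec v, Jm.mulVec (K'm.mulVec v)} := by
      rw [hid]
      exact Submodule.mem_span_pair.mpr ⟨s, -t, by module⟩
    exact Kne _ hz0 (h _ ⟨hKz, hKzB⟩)

lemma coords {v : Fin 4 → ℝ} (hv : v ≠ 0) (u : Fin 4 → ℝ) :
    ∃ a b c d : ℝ, u = a • v + b • Jm.mulVec v + c • K'm.mulVec v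
      + d • Jm.mulVec (K'm.mulVec v) := by
  have hind : LinearIndependent ℝ
      ![v, Jm.mulVec v, K'm.mulVec v, Jm.mulVec (K'm.mulVec v)] := by
    rw [Fintype.linearIndependent_iff]
    intro g hg i
    have := quat4 (g 0) (g 1) (g 2) (g 3) v hv (by
      simpa [Fin.sum_univ_four] using hg)
    fin_cases i <;> simp [this.1, this.2.1, this.2.2.1, this.2.2.2]
  have htop : span ℝ (Set.range
      ![v, Jm.mulVec v, K'm.mulVec v, Jm.mulVec (K'm.mulVec v)]) = ⊤ := by
    apply Submodule.eq_top_of_finrank_eq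
    rw [finrank_span_eq_card hind, Fintype.card_fin, Module.finrank_fin_fun]
  have hu : u ∈ span ℝ (Set.range
      ![v, Jm.mulVec v, K'm.mulVec v, Jm.mulVec (K'm.mulVec v)]) := by
    rw [htop]; trivial
  rw [mem_span_range_iff_exists_fun] at hu
  obtain ⟨g, hg⟩ := hu
  exact ⟨g 0, g 1, g 2, g 3, by rw [← hg, Fin.sum_univ_four]; rfl⟩

lemma prop2 {α β α₀ β₀ : ℝ} (h : ¬(α = 0 ∧ β = 0)) (h0 : ¬(α₀ = 0 ∧ β₀ = 0))
    (hcross : β * α₀ = α * β₀) : ∃ c, c ≠ 0 ∧ α₀ = c * α ∧ β₀ = c * β := by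
  rcases eq_or_ne α 0 with hα | hα
  · subst hα
    have hβ : β ≠ 0 := fun hβ => h ⟨rfl, hβ⟩
    have hα₀ : α₀ = 0 := by
      have : β * α₀ = 0 := by rw [hcross]; ring
      exact (mul_eq_zero.mp this).resolve_left hβ
    refine ⟨β₀ / β, ?_, by rw [hα₀]; ring, by field_simp⟩
    have hβ₀ : β₀ ≠ 0 := fun hb => h0 ⟨hα₀, hb⟩
    exact div_ne_zero hβ₀ hβ
  · refine ⟨α₀ / α, ?_, by field_simp, ?_⟩
    · intro hc
      have hα₀ : α₀ = 0 := by
        field_simp at hc; simpa using hc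
      apply h0
      refine ⟨hα₀, ?_⟩
      have : α * β₀ = 0 := by rw [← hcross, hα₀]; ring
      exact (mul_eq_zero.mp this).resolve_left hα
    · field_simp
      linear_combination -hcross

lemma span_smul_pair {c : ℝ} (hc : c ≠ 0) (x y : Fin 4 → ℝ) :
    span ℝ {c • x, c • y} = span ℝ {x, y} := by
  apply le_antisymm
  · rw [Submodule.span_le]
    rintro z (rfl | rfl)
    · exact Submodule.smul_mem _ _ (Submodule.subset_span (by simp))
    · exact Submodule.smul_mem _ _ (Submodule.subset_span (by simp))
  · rw [Submodule.span_le]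
    rintro z (rfl | rfl)
    · have h := Submodule.smul_mem (span ℝ {c • z, c • y}) c⁻¹
        (Submodule.subset_span (show c • z ∈ ({c • z, c • y} : Set _) by simp))
      rwa [smul_smul, inv_mul_cancel₀ hc, one_smul] at h
    · have h := Submodule.smul_mem (span ℝ {c • x, c • z}) c⁻¹
        (Submodule.subset_span (show c • z ∈ ({c • x, c • z} : Set _) by simp))
      rwa [smul_smul, inv_mul_cancel₀ hc, one_smul] at h

lemma witness_mem
    {E E' : Submodule ℝ (Fin 4 → ℝ)} (hE : IsJLine E) (hE' : IsJLine E')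
    {v u' : Fin 4 → ℝ} (hv : v ≠ 0)
    (hEv : E = span ℝ {v, Jm.mulVec v})
    (hE'u : E' = span ℝ {u', Jm.mulVec u'})
    {a b c d : ℝ}
    (hu' : u' = a • v + b • Jm.mulVec v + c • K'm.mulVec v
      + d • Jm.mulVec (K'm.mulVec v))
    (hN : c ^ 2 + d ^ 2 ≠ 0)
    {α β : ℝ} (hab : ¬(α = 0 ∧ β = 0))
    (hQ : (b*c - a*d) * α^2 - 2*(a*c + b*d) * α * β - (b*c - a*d) * β^2 = 0) :
    span ℝ {α • v + β • Jm.mulVec v, K'm.mulVec (α • v + β • Jm.mulVec v)}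
      ∈ LagLocus E ∩ LagLocus E' := by
  have hw : α • v + β • Jm.mulVec v ≠ 0 := by
    intro h
    have := quat4 α β 0 0 v hv (by simpa using h)
    exact hab ⟨this.1, this.2.1⟩
  have hab2 : α ^ 2 + β ^ 2 ≠ 0 := by
    intro h
    exact hab ⟨by nlinarith [sq_nonneg α, sq_nonneg β], by nlinarith [sq_nonneg α, sq_nonneg β]⟩
  have hF := mk_K _ hw
  have hwE : α • v + β • Jm.mulVec v ∈ E := by
    rw [hEv]; exact Submodule.mem_span_pair.mpr ⟨α, β, rfl⟩
  constructor
  · rw [locus_mem_iff hE]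
    refine ⟨hF, (Submodule.ne_bot_iff _).mpr ⟨_, ⟨Submodule.subset_span (by simp), hwE⟩, hw⟩⟩
  · rw [locus_mem_iff hE']
    refine ⟨hF, ?_⟩
    set p := a*c + b*d with hp
    set q := b*c - a*d with hq
    set x := (c*α - d*β)*(α^2 + β^2) with hx
    set y := -((d*α + c*β)*(α^2 + β^2)) with hy
    set s := (p*α + q*β)*α + (q*α - p*β)*β with hs
    have hJu' : Jm.mulVec u' = (-b) • v + a • Jm.mulVec v + (-d) • K'm.mulVec v
        + c • Jm.mulVec (K'm.mulVec v) := by rw [hu']; exact Jcomb a b c d v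
    have hKw : K'm.mulVec (α • v + β • Jm.mulVec v)
        = α • K'm.mulVec v + (-β) • Jm.mulVec (K'm.mulVec v) := by
      have := Kcomb α β 0 0 v
      simpa using this
    have heq : x • u' + y • Jm.mulVec u'
        = s • (α • v + β • Jm.mulVec v)
          + ((c^2 + d^2)*(α^2 + β^2)) • K'm.mulVec (α • v + β • Jm.mulVec v) := by
      rw [hJu', hu', hKw]
      match_scalars
      · linear_combination (-β) * hQ
      · linear_combination α * hQ
      · ring
      · ring
    have hmemF : x • u' + y • Jm.mulVec u'
        ∈ span ℝ {α • v + β • Jm.mulVec v, K'm.mulVec (α • v + β • Jm.mulVec v)} := by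
      rw [heq]
      exact Submodule.mem_span_pair.mpr ⟨s, (c^2 + d^2)*(α^2 + β^2), rfl⟩
    have hmemE' : x • u' + y • Jm.mulVec u' ∈ E' := by
      rw [hE'u]
      exact Submodule.mem_span_pair.mpr ⟨x, y, rfl⟩
    have hne0 : x • u' + y • Jm.mulVec u' ≠ 0 := by
      rw [heq]
      intro h
      have := (LinearIndependent.pair_iff.mp (indep_K _ hw)) s ((c^2+d^2)*(α^2+β^2)) h
      exact mul_ne_zero hN hab2 this.2
    exact (Submodule.ne_bot_iff _).mpr ⟨_, ⟨hmemF, hmemE'⟩, hne0⟩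

lemma uniq_mem
    {E E' F : Submodule ℝ (Fin 4 → ℝ)} (hE : IsJLine E) (hE' : IsJLine E')
    {v u' : Fin 4 → ℝ} (hv : v ≠ 0)
    (hEv : E = span ℝ {v, Jm.mulVec v})
    (hE'u : E' = span ℝ {u', Jm.mulVec u'})
    {a b c d : ℝ}
    (hu' : u' = a • v + b • Jm.mulVec v + c • K'm.mulVec v
      + d • Jm.mulVec (K'm.mulVec v))
    (hN : c ^ 2 + d ^ 2 ≠ 0)
    (hFE : F ∈ LagLocus E) (hFE' : F ∈ LagLocus E') :
    ∃ α₀ β₀ : ℝ, ¬(α₀ = 0 ∧ β₀ = 0) ∧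
      ((b*c - a*d) * α₀^2 - 2*(a*c + b*d) * α₀ * β₀ - (b*c - a*d) * β₀^2 = 0) ∧
      F = span ℝ {α₀ • v + β₀ • Jm.mulVec v,
        K'm.mulVec (α₀ • v + β₀ • Jm.mulVec v)} := by
  obtain ⟨hF, hFEne⟩ := (locus_mem_iff hE).mp hFE
  obtain ⟨-, hFE'ne⟩ := (locus_mem_iff hE').mp hFE'
  obtain ⟨w₀, ⟨hw₀F, hw₀E⟩, hw₀0⟩ := (Submodule.ne_bot_iff _).mp hFEne
  rw [hEv] at hw₀E
  obtain ⟨α₀, β₀, hw₀⟩ := Submodule.mem_span_pair.mp hw₀E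
  have nz : ¬(α₀ = 0 ∧ β₀ = 0) := by
    rintro ⟨rfl, rfl⟩
    apply hw₀0
    rw [← hw₀]; simp
  have hFspan : F = span ℝ {w₀, K'm.mulVec w₀} := elt_K hF hw₀F hw₀0
  obtain ⟨u'', ⟨hu''F, hu''E'⟩, hu''0⟩ := (Submodule.ne_bot_iff _).mp hFE'ne
  rw [hFspan] at hu''F
  obtain ⟨s, t, hst⟩ := Submodule.mem_span_pair.mp hu''F
  rw [hE'u] at hu''E'
  obtain ⟨x, y, hxy⟩ := Submodule.mem_span_pair.mp hu''E'
  have heq : s • w₀ + t • K'm.mulVec w₀ = x • u' + y • Jm.mulVec u' := by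
    rw [hst, hxy]
  have hKw₀ : K'm.mulVec w₀ = α₀ • K'm.mulVec v
      + (-β₀) • Jm.mulVec (K'm.mulVec v) := by
    rw [← hw₀]
    have := Kcomb α₀ β₀ 0 0 v
    simpa using this
  have hJu' : Jm.mulVec u' = (-b) • v + a • Jm.mulVec v + (-d) • K'm.mulVec v
      + c • Jm.mulVec (K'm.mulVec v) := by rw [hu']; exact Jcomb a b c d v
  rw [hKw₀, ← hw₀, hJu', hu'] at heq
  have hcombo : (s*α₀ - (x*a - y*b)) • v + (s*β₀ - (x*b + y*a)) • Jm.mulVec v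
      + (t*α₀ - (x*c - y*d)) • K'm.mulVec v
      + (-(t*β₀) - (x*d + y*c)) • Jm.mulVec (K'm.mulVec v) = 0 := by
    linear_combination (norm := module) heq
  obtain ⟨e1, e2, e3, e4⟩ := quat4 _ _ _ _ v hv hcombo
  have ht : t ≠ 0 := by
    intro ht0
    rw [ht0] at e3 e4
    have hx0 : x = 0 := by
      have : x * (c^2 + d^2) = 0 := by linear_combination (-c)*e3 - d*e4
      exact (mul_eq_zero.mp this).resolve_right hN
    have hy0 : y = 0 := by
      have : y * (c^2 + d^2) = 0 := by linear_combination d*e3 - c*e4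
      exact (mul_eq_zero.mp this).resolve_right hN
    apply hu''0
    rw [← hxy, hx0, hy0]; simp
  have f1 : x*(c^2+d^2) = t*(c*α₀ - d*β₀) := by linear_combination (-c)*e3 - d*e4
  have f2 : y*(c^2+d^2) = -(t*(d*α₀ + c*β₀)) := by linear_combination d*e3 - c*e4
  have g1 : s*α₀*(c^2+d^2) = t*((a*c+b*d)*α₀ + (b*c-a*d)*β₀) := by
    linear_combination (c^2+d^2)*e1 + a*f1 - b*f2
  have g2 : s*β₀*(c^2+d^2) = t*((b*c-a*d)*α₀ - (a*c+b*d)*β₀) := by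
    linear_combination (c^2+d^2)*e2 + b*f1 + a*f2
  have hQt : t * ((b*c - a*d) * α₀^2 - 2*(a*c + b*d) * α₀ * β₀
      - (b*c - a*d) * β₀^2) = 0 := by
    linear_combination β₀*g1 - α₀*g2
  exact ⟨α₀, β₀, nz, (mul_eq_zero.mp hQt).resolve_left ht, by rw [hw₀]; exact hFspan⟩

lemma Kpair (α β : ℝ) (v : Fin 4 → ℝ) :
    K'm.mulVec (α • v + β • Jm.mulVec v)
      = α • K'm.mulVec v + (-β) • Jm.mulVec (K'm.mulVec v) := by
  have := Kcomb α β 0 0 v; simpa using this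

lemma Jpair (α β : ℝ) (v : Fin 4 → ℝ) :
    Jm.mulVec (α • v + β • Jm.mulVec v) = (-β) • v + α • Jm.mulVec v := by
  have := Jcomb α β 0 0 v; simpa using this

lemma JKpair (α β : ℝ) (v : Fin 4 → ℝ) :
    Jm.mulVec (K'm.mulVec (α • v + β • Jm.mulVec v))
      = β • K'm.mulVec v + α • Jm.mulVec (K'm.mulVec v) := by
  rw [Kpair]
  have := Jcomb 0 0 α (-β) v
  simp only [zero_smul, add_zero, zero_add, neg_zero, neg_neg] at this
  rw [this]


/-- For distinct `J`-complex lines `E ≠ E'`: if `E' = E^⊥` then `Λ⁺_E = Λ⁺_{E'}`,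
and if `E' ≠ E^⊥` then `Λ⁺_E ∩ Λ⁺_{E'}` consists of exactly two `K'`-complex planes. -/
theorem lagrangian_loci_intersection
    (E E' Ep : Submodule ℝ (Fin 4 → ℝ))
    (hE : IsJLine E) (hE' : IsJLine E') (hne : E ≠ E')
    (hperp : ∀ w, w ∈ Ep ↔ ∀ z ∈ E, dot4 z w = 0) :
    (E' = Ep → LagLocus E = LagLocus E') ∧
    (E' ≠ Ep → ∃ F₁ F₂ : Submodule ℝ (Fin 4 → ℝ), F₁ ≠ F₂ ∧
      ∀ F, F ∈ LagLocus E ∩ LagLocus E' ↔ F = F₁ ∨ F = F₂) := by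
  obtain ⟨v, hvE, hv⟩ := exists_ne_zero_of_finrank_two hE.1
  have hEv : E = span ℝ {v, Jm.mulVec v} := elt_J hE hvE hv
  have hBEp : span ℝ {K'm.mulVec v, Jm.mulVec (K'm.mulVec v)} = Ep :=
    B_eq_Ep hperp hv hEv
  constructor
  · intro h
    rw [h, locus_eq_locus_B hE hv hEv, hBEp]
  · intro hEp
    have hdisj : E ⊓ E' = ⊥ := disj_J hE hE' hne
    obtain ⟨u', hu'E', hu'0⟩ := exists_ne_zero_of_finrank_two hE'.1
    have hE'u : E' = span ℝ {u', Jm.mulVec u'} := elt_J hE' hu'E' hu'0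
    obtain ⟨a, b, c, d, hu'⟩ := coords hv u'
    have hN : c ^ 2 + d ^ 2 ≠ 0 := by
      intro h
      have hc : c = 0 := by nlinarith [sq_nonneg c, sq_nonneg d]
      have hd : d = 0 := by nlinarith [sq_nonneg c, sq_nonneg d]
      have hu'E : u' ∈ E := by
        rw [hEv]
        exact Submodule.mem_span_pair.mpr ⟨a, b, by rw [hu', hc, hd]; module⟩
      have : u' ∈ E ⊓ E' := ⟨hu'E, hu'E'⟩
      rw [hdisj] at this
      exact hu'0 this
    have hpq : ¬((a*c + b*d) = 0 ∧ (b*c - a*d) = 0) := by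
      rintro ⟨hp0, hq0⟩
      have ha : a = 0 := by
        have : a * (c^2 + d^2) = 0 := by linear_combination c*hp0 - d*hq0
        exact (mul_eq_zero.mp this).resolve_right hN
      have hb : b = 0 := by
        have : b * (c^2 + d^2) = 0 := by linear_combination d*hp0 + c*hq0
        exact (mul_eq_zero.mp this).resolve_right hN
      have hle : E' ≤ span ℝ {K'm.mulVec v, Jm.mulVec (K'm.mulVec v)} := by
        rw [hE'u, Submodule.span_le]
        rintro z (rfl | rfl)
        · exact Submodule.mem_span_pair.mpr ⟨c, d, by rw [hu', ha, hb]; module⟩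
        · refine Submodule.mem_span_pair.mpr ⟨-d, c, ?_⟩
          rw [hu', Jcomb a b c d v, ha, hb]
          module
      apply hEp
      rw [← hBEp]
      exact Submodule.eq_of_le_of_finrank_le hle (by
        rw [finrank_span_pair (indep_J (K'm.mulVec v) (Kne v hv)), hE'.1])
    -- abbreviations
    have hr2 : (Real.sqrt ((a*c+b*d)^2 + (b*c-a*d)^2))^2
        = (a*c+b*d)^2 + (b*c-a*d)^2 := Real.sq_sqrt (by positivity)
    obtain ⟨α, β, hab, hQ, γ, hγ, hfac⟩ :
        ∃ α β : ℝ, ¬(α = 0 ∧ β = 0) ∧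
          ((b*c - a*d) * α^2 - 2*(a*c + b*d) * α * β - (b*c - a*d) * β^2 = 0) ∧
          ∃ γ : ℝ, γ ≠ 0 ∧ ∀ X Y : ℝ,
            (β*X - α*Y) * (α*X + β*Y)
              = γ * ((b*c - a*d) * X^2 - 2*(a*c + b*d) * X * Y
                - (b*c - a*d) * Y^2) := by
      set r := Real.sqrt ((a*c+b*d)^2 + (b*c-a*d)^2) with hrdef
      rcases eq_or_ne (b*c - a*d) 0 with hq0 | hq0
      · have hp0 : (a*c + b*d) ≠ 0 := fun h => hpq ⟨h, hq0⟩
        refine ⟨1, 0, by simp, by rw [hq0]; ring, 1/(2*(a*c+b*d)), by positivity, ?_⟩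
        intro X Y
        rw [hq0]
        field_simp
        ring
      · refine ⟨(a*c+b*d) + r, (b*c-a*d), fun h => hq0 h.2, by linear_combination (b*c-a*d)*hr2, (a*c+b*d) + r, ?_, ?_⟩
        · intro h0
          have hqq : (b*c-a*d)^2 = 0 := by
            linear_combination (-1)*hr2 + (r - (a*c+b*d))*h0
          exact hq0 (pow_eq_zero_iff two_ne_zero |>.mp hqq)
        · intro X Y
          linear_combination (-(X*Y)) * hr2
    have hab' : ¬(β = 0 ∧ -α = 0) := fun h => hab ⟨by linarith [h.2], h.1⟩
    have hQ' : (b*c - a*d) * β^2 - 2*(a*c + b*d) * β * (-α)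
        - (b*c - a*d) * (-α)^2 = 0 := by linear_combination -hQ
    have hF₁mem := witness_mem hE hE' hv hEv hE'u hu' hN hab hQ
    have hF₂mem := witness_mem hE hE' hv hEv hE'u hu' hN hab' hQ'
    have hw0 : α • v + β • Jm.mulVec v ≠ 0 := by
      intro h
      have := quat4 α β 0 0 v hv (by simpa using h)
      exact hab ⟨this.1, this.2.1⟩
    have hw20 : β • v + (-α) • Jm.mulVec v ≠ 0 := by
      intro h
      have := quat4 β (-α) 0 0 v hv (by simpa using h)
      exact hab' ⟨this.1, this.2.1⟩
    refine ⟨span ℝ {α • v + β • Jm.mulVec v, K'm.mulVec (α • v + β • Jm.mulVec v)},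
      span ℝ {β • v + (-α) • Jm.mulVec v, K'm.mulVec (β • v + (-α) • Jm.mulVec v)},
      ?_, ?_⟩
    · -- F₁ ≠ F₂
      intro h
      have hwm : α • v + β • Jm.mulVec v
          ∈ span ℝ {α • v + β • Jm.mulVec v, K'm.mulVec (α • v + β • Jm.mulVec v)} :=
        Submodule.subset_span (by simp)
      have hKwm : K'm.mulVec (α • v + β • Jm.mulVec v)
          ∈ span ℝ {α • v + β • Jm.mulVec v, K'm.mulVec (α • v + β • Jm.mulVec v)} :=
        Submodule.subset_span (by simp)
      have hw2m : β • v + (-α) • Jm.mulVec v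
          ∈ span ℝ {α • v + β • Jm.mulVec v, K'm.mulVec (α • v + β • Jm.mulVec v)} := by
        rw [h]; exact Submodule.subset_span (by simp)
      have hKw2m : K'm.mulVec (β • v + (-α) • Jm.mulVec v)
          ∈ span ℝ {α • v + β • Jm.mulVec v, K'm.mulVec (α • v + β • Jm.mulVec v)} := by
        rw [h]; exact Submodule.subset_span (by simp)
      have hJwm : Jm.mulVec (α • v + β • Jm.mulVec v)
          ∈ span ℝ {α • v + β • Jm.mulVec v, K'm.mulVec (α • v + β • Jm.mulVec v)} := by
        rw [show Jm.mulVec (α • v + β • Jm.mulVec v)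
            = (-1 : ℝ) • (β • v + (-α) • Jm.mulVec v) by rw [Jpair]; module]
        exact Submodule.smul_mem _ _ hw2m
      have hJKwm : Jm.mulVec (K'm.mulVec (α • v + β • Jm.mulVec v))
          ∈ span ℝ {α • v + β • Jm.mulVec v, K'm.mulVec (α • v + β • Jm.mulVec v)} := by
        rw [show Jm.mulVec (K'm.mulVec (α • v + β • Jm.mulVec v))
            = K'm.mulVec (β • v + (-α) • Jm.mulVec v) by rw [JKpair, Kpair]; module]
        exact hKw2m
      have h4 := four_le hw0 hwm hJwm hKwm hJKwm
      rw [(mk_K _ hw0).1] at h4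
      omega
    · intro F
      constructor
      · rintro ⟨hFE, hFE'⟩
        obtain ⟨α₀, β₀, nz, hQ0, hFsp⟩ :=
          uniq_mem hE hE' hv hEv hE'u hu' hN hFE hFE'
        have hzero : (β*α₀ - α*β₀) * (α*α₀ + β*β₀) = 0 := by
          rw [hfac α₀ β₀, hQ0, mul_zero]
        rcases mul_eq_zero.mp hzero with hcase | hcase
        · left
          obtain ⟨c₀, hc₀, hα₀, hβ₀⟩ := prop2 hab nz (by linarith [hcase] :
            β * α₀ = α * β₀)
          rw [hFsp,
            show α₀ • v + β₀ • Jm.mulVec v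
              = c₀ • (α • v + β • Jm.mulVec v) by rw [hα₀, hβ₀]; module,
            Ksmul, span_smul_pair hc₀]
        · right
          obtain ⟨c₀, hc₀, hα₀, hβ₀⟩ := prop2 hab' nz (by linarith [hcase] :
            (-α) * α₀ = β * β₀)
          rw [hFsp,
            show α₀ • v + β₀ • Jm.mulVec v
              = c₀ • (β • v + (-α) • Jm.mulVec v) by rw [hα₀, hβ₀]; module,
            Ksmul, span_smul_pair hc₀]
      · rintro (rfl | rfl)
        · exact hF₁mem
        · exact hF₂mem
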